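/- Let 𝒰 be a selective ultrafilter on ℕ (nonprincipal, and every function ℕ → ℕ is constant or injective on some set of 𝒰). Then for every function g : ℕ → ℕ there exists A ∈ 𝒰 such that for all a, b ∈ A with a < b, g(a) < b. -/

import Mathlib

private def Gfun (g : ℕ → ℕ) (n : ℕ) : ℕ := (Finset.range (n+1)).sup g

private lemma Gfun_mono (g : ℕ → ℕ) : Monotone (Gfun g) := fun a b h =>
  Finset.sup_mono (Finset.range_subset_range.2 (by omega))

private lemma le_Gfun (g : ℕ → ℕ) (n : ℕ) : g n ≤ Gfun g n :=
  Finset.le_sup (Finset.self_mem_range_succ n)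

private def hfun (g : ℕ → ℕ) : ℕ → ℕ
  | 0 => 0
  | k+1 => hfun g k + Gfun g (hfun g k) + 1

private lemma hfun_lt (g : ℕ → ℕ) (k : ℕ) : hfun g k < hfun g (k+1) := by
  simp [hfun]

private lemma hfun_strictMono (g : ℕ → ℕ) : StrictMono (hfun g) :=
  strictMono_nat_of_lt_succ (hfun_lt g)

private lemma le_hfun (g : ℕ → ℕ) (k : ℕ) : k ≤ hfun g k := by
  induction k with
  | zero => simp [hfun]
  | succ n ih => have := hfun_lt g n; omega

private def ffun (g : ℕ → ℕ) (n : ℕ) : ℕ :=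
  Nat.findGreatest (fun k => hfun g k ≤ n) n

private lemma hfun_ffun_le (g : ℕ → ℕ) (n : ℕ) : hfun g (ffun g n) ≤ n :=
  Nat.findGreatest_spec (P := fun k => hfun g k ≤ n) (m := 0) (Nat.zero_le n)
    (by simp [hfun])

private lemma lt_hfun_ffun_succ (g : ℕ → ℕ) (n : ℕ) : n < hfun g (ffun g n + 1) := by
  by_contra h
  push_neg at h
  have h1 : ffun g n + 1 ≤ n := le_trans (le_hfun g _) h
  have h2 := Nat.le_findGreatest (P := fun k => hfun g k ≤ n) h1 h
  have : ffun g n + 1 ≤ ffun g n := h2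
  omega

private lemma ffun_mono (g : ℕ → ℕ) : Monotone (ffun g) := by
  intro a b hab
  have h1 : hfun g (ffun g a) ≤ b := le_trans (hfun_ffun_le g a) hab
  have h2 : ffun g a ≤ b := le_trans (le_trans (le_hfun g _) (hfun_ffun_le g a)) hab
  exact Nat.le_findGreatest h2 h1

/-- A nonprincipal selective ultrafilter on `ℕ` has the rapid-growth property:
for every `g : ℕ → ℕ` there is a member `A` such that `g a < b` whenever
`a < b` are in `A`. -/
theorem stmt_16 (𝒰 : Ultrafilter ℕ)
    (hnp : ∀ x : ℕ, 𝒰 ≠ pure x)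
    (hsel : ∀ f : ℕ → ℕ, ∃ A ∈ 𝒰,
      (∀ a ∈ A, ∀ b ∈ A, f a = f b) ∨ Set.InjOn f A) :
    ∀ g : ℕ → ℕ, ∃ A ∈ 𝒰, ∀ a ∈ A, ∀ b ∈ A, a < b → g a < b := by
  intro g
  obtain ⟨A, hA, hcase⟩ := hsel (ffun g)
  have hinj : Set.InjOn (ffun g) A := by
    rcases hcase with hconst | hinj
    · exfalso
      -- A would be finite, contradicting nonprincipality
      rcases (𝒰 : Filter ℕ).nonempty_of_mem hA with ⟨a0, ha0⟩
      have hsub : A ⊆ Set.Iio (hfun g (ffun g a0 + 1)) := by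
        intro x hx
        have := hconst x hx a0 ha0
        have hx1 := lt_hfun_ffun_succ g x
        rw [this] at hx1
        exact hx1
      have hfin : A.Finite := (Set.finite_Iio _).subset hsub
      obtain ⟨x, -, hx⟩ := 𝒰.eq_pure_of_finite_mem hfin hA
      exact hnp x hx
    · exact hinj
  -- split by parity of block index
  set E : Set ℕ := {n | Even (ffun g n)} with hE
  have key : ∀ B ∈ 𝒰, B ⊆ A → (∀ a ∈ B, ∀ b ∈ B, Even (ffun g a) ↔ Even (ffun g b)) →
      ∃ A ∈ 𝒰, ∀ a ∈ A, ∀ b ∈ A, a < b → g a < b := by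
    intro B hB hBA hpar
    refine ⟨B, hB, ?_⟩
    intro a ha b hb hab
    have hne : ffun g a ≠ ffun g b := fun h => absurd (hinj (hBA ha) (hBA hb) h) hab.ne
    have hle : ffun g a ≤ ffun g b := ffun_mono g hab.le
    have h2 : ffun g a + 2 ≤ ffun g b := by
      have hpab := hpar a ha b hb
      rw [Nat.even_iff, Nat.even_iff] at hpab
      omega
    have hb1 : hfun g (ffun g a + 2) ≤ b :=
      le_trans ((hfun_strictMono g).monotone h2) (hfun_ffun_le g b)
    have hga : g a ≤ Gfun g (hfun g (ffun g a + 1)) :=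
      le_trans (le_Gfun g a) (Gfun_mono g (lt_hfun_ffun_succ g a).le)
    have : hfun g (ffun g a + 2) = hfun g (ffun g a + 1) + Gfun g (hfun g (ffun g a + 1)) + 1 := rfl
    omega
  rcases 𝒰.mem_or_compl_mem E with hEm | hEm
  · refine key (A ∩ E) (Filter.inter_mem hA hEm) Set.inter_subset_left ?_
    intro a ha b hb
    exact iff_of_true ha.2 hb.2
  · refine key (A ∩ Eᶜ) (Filter.inter_mem hA hEm) Set.inter_subset_left ?_
    intro a ha b hb
    exact iff_of_false ha.2 hb.2
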